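/- The sorting transduction {(w, a^{|w|_a} b^{|w|_b}) : w ∈ {a,b}⁺} is realized by a cellular automaton transducer in real time (both input-acceptance and output-completion time equal to the input length n). -/

import Mathlib

/-! Cellular automaton transducers (CAT). -/

/-- A cellular automaton transducer over input alphabet `A` and output alphabet `B`.
`S` is the finite set of cell states, `accept` the accepting states, `embed` views
input symbols as states, and `δ left self right = (new state, output)` where the
output component `none` means no output (`⊥`) and `some v` means the word `v` is emitted. -/
structure CAT (A B : Type) where
  S : Type
  fin : Fintype S
  accept : Set S
  embed : A → S
  δ : Option S → S → Option S → S × Option (List B)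

/-- Left neighbour (boundary `#` is `none`). -/
def nbL {σ : Type} {n : ℕ} (c : Fin n → σ) (i : Fin n) : Option σ :=
  if 0 < i.val then some (c ⟨i.val - 1, Nat.lt_of_le_of_lt (Nat.sub_le _ _) i.isLt⟩) else none

/-- Right neighbour (boundary `#` is `none`). -/
def nbR {σ : Type} {n : ℕ} (c : Fin n → σ) (i : Fin n) : Option σ :=
  if h : i.val + 1 < n then some (c ⟨i.val + 1, h⟩) else none

/-- The configuration (cell states and output registers) of `M` on input `w` at time `t`. -/
def CATconf {A B : Type} (M : CAT A B) (w : List A) :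
    ℕ → (Fin w.length → M.S) × (Fin w.length → Option (List B))
  | 0 => (fun i => M.embed (w.get i), fun _ => none)
  | t+1 =>
    let p := CATconf M w t
    (fun i => (M.δ (nbL p.1 i) (p.1 i) (nbR p.1 i)).1,
     fun i => match p.2 i with
       | some v => some v
       | none => (M.δ (nbL p.1 i) (p.1 i) (nbR p.1 i)).2)

/-- The input `w` is accepted within `tb` steps: the leftmost cell enters an accepting state. -/
def CATAcceptsBy {A B : Type} (M : CAT A B) (w : List A) (tb : ℕ) : Prop :=
  ∃ t ≤ tb, ∃ h : 0 < w.length, (CATconf M w t).1 ⟨0, h⟩ ∈ M.accept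

/-- By time `tb` every cell has emitted an output and the concatenation is `v`. -/
def CATOutputsBy {A B : Type} (M : CAT A B) (w : List A) (v : List B) (tb : ℕ) : Prop :=
  (∀ i, ((CATconf M w tb).2 i).isSome = true) ∧
  v = (List.ofFn (fun i => ((CATconf M w tb).2 i).getD [])).flatten

/-- The transduction realized by `M`. -/
def CATTransduction {A B : Type} (M : CAT A B) : Set (List A × List B) :=
  {p | (∃ t, CATAcceptsBy M p.1 t) ∧ ∃ t, CATOutputsBy M p.1 p.2 t}

/-- `M` has time complexity `(t_i, t_o)`. -/
def CATTimeBounded {A B : Type} (M : CAT A B) (t_i t_o : ℕ → ℕ) : Prop :=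
  ∀ p ∈ CATTransduction M,
    CATAcceptsBy M p.1 (t_i p.1.length) ∧ CATOutputsBy M p.1 p.2 (t_o p.1.length)

/-- The family of transductions computed by CATs whose input time satisfies `Ti`
and output time satisfies `To`. -/
def CATT (A B : Type) (Ti To : (ℕ → ℕ) → Prop) : Set (Set (List A × List B)) :=
  {T | ∃ M : CAT A B, ∃ t_i t_o, Ti t_i ∧ To t_o ∧ T = CATTransduction M ∧ CATTimeBounded M t_i t_o}

/-- Real time for CATs: `t(n) = n`. -/
def rtC : (ℕ → ℕ) → Prop := fun t => t = id

/-- Linear time: `t(n) = k·n` for some rational `k ≥ 1`. -/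
def lin : (ℕ → ℕ) → Prop := fun t => ∃ k : ℚ, 1 ≤ k ∧ ∀ n, t n = ⌈k * n⌉₊

namespace SortCAT

/-- The sorting machine: values follow elementary rule 184 (a `b` moves right
if its right neighbour is an `a`), and a `settled` flag propagates from the
boundaries; a cell emits its value when it becomes settled. -/
def Msort : CAT Bool Bool where
  S := Bool × Bool
  fin := inferInstance
  accept := Set.univ
  embed b := (b, false)
  δ l s r :=
    let lv := (Option.map Prod.fst l).getD false
    let ls := (Option.map Prod.snd l).getD true
    let rv := (Option.map Prod.fst r).getD true
    let rs := (Option.map Prod.snd r).getD true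
    let nv := (s.1 && rv) || (lv && !s.1)
    let ns := cond nv (rs && rv) (ls && !lv)
    ((nv, ns), cond ns (some [nv]) none)

/-- Cell value at time `t`. -/
def VL (w : List Bool) (t : ℕ) (i : Fin w.length) : Bool := ((CATconf Msort w t).1 i).1
/-- Cell settled flag at time `t`. -/
def SL (w : List Bool) (t : ℕ) (i : Fin w.length) : Bool := ((CATconf Msort w t).1 i).2
/-- Output register at time `t`. -/
def Rg (w : List Bool) (t : ℕ) (i : Fin w.length) : Option (List Bool) := (CATconf Msort w t).2 i

/-- Extended value function on `ℤ`: `false` (= `a`) left of the word,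
`true` (= `b`) right of it. -/
def Vx (w : List Bool) (x : ℤ) (t : ℕ) : Bool :=
  if h : 0 ≤ x ∧ x < w.length then VL w t ⟨x.toNat, by omega⟩ else decide ((w.length : ℤ) ≤ x)

/-- Extended settled function: `true` outside the word. -/
def Sx (w : List Bool) (x : ℤ) (t : ℕ) : Bool :=
  if h : 0 ≤ x ∧ x < w.length then SL w t ⟨x.toNat, by omega⟩ else true

lemma Vx_neg (w : List Bool) (x : ℤ) (t : ℕ) (hx : x < 0) : Vx w x t = false := by
  simp only [Vx]; rw [dif_neg (by omega)]; simp; omega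

lemma Vx_ge (w : List Bool) (x : ℤ) (t : ℕ) (hx : (w.length : ℤ) ≤ x) : Vx w x t = true := by
  simp only [Vx]; rw [dif_neg (by omega)]; simpa

lemma Sx_out (w : List Bool) (x : ℤ) (t : ℕ) (hx : ¬ (0 ≤ x ∧ x < w.length)) :
    Sx w x t = true := by
  simp only [Sx]; rw [dif_neg hx]

lemma Vx_zero (w : List Bool) (x : ℤ) (h : 0 ≤ x ∧ x < w.length) :
    Vx w x 0 = w.get ⟨x.toNat, by omega⟩ := by
  simp only [Vx]; rw [dif_pos h]; rfl

lemma SL_zero (w : List Bool) (i : Fin w.length) : SL w 0 i = false := rfl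

lemma Vx_in (w : List Bool) (t : ℕ) (x : ℤ) (h : 0 ≤ x ∧ x < w.length) :
    Vx w x t = VL w t ⟨x.toNat, by omega⟩ := by
  simp only [Vx]; rw [dif_pos h]

lemma Sx_in (w : List Bool) (t : ℕ) (x : ℤ) (h : 0 ≤ x ∧ x < w.length) :
    Sx w x t = SL w t ⟨x.toNat, by omega⟩ := by
  simp only [Sx]; rw [dif_pos h]

lemma nbL_fst (w : List Bool) (t : ℕ) (i : Fin w.length) :
    (Option.map Prod.fst (nbL (CATconf Msort w t).1 i)).getD false = Vx w ((i : ℕ) - 1) t := by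
  by_cases h : 0 < i.val
  · unfold nbL; rw [if_pos h]
    rw [Vx_in w t _ (by omega)]
    show ((CATconf Msort w t).1 _).1 = _
    have : (⟨((i:ℕ) - 1 : ℤ).toNat, by omega⟩ : Fin w.length)
        = ⟨i.val - 1, Nat.lt_of_le_of_lt (Nat.sub_le _ _) i.isLt⟩ := by
      ext; simp only [Fin.val_mk]; omega
    rw [this]; rfl
  · unfold nbL; rw [if_neg h]
    rw [Vx_neg w _ t (by omega)]; rfl

lemma nbL_snd (w : List Bool) (t : ℕ) (i : Fin w.length) :
    (Option.map Prod.snd (nbL (CATconf Msort w t).1 i)).getD true = Sx w ((i : ℕ) - 1) t := by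
  by_cases h : 0 < i.val
  · unfold nbL; rw [if_pos h]
    rw [Sx_in w t _ (by omega)]
    show ((CATconf Msort w t).1 _).2 = _
    have : (⟨((i:ℕ) - 1 : ℤ).toNat, by omega⟩ : Fin w.length)
        = ⟨i.val - 1, Nat.lt_of_le_of_lt (Nat.sub_le _ _) i.isLt⟩ := by
      ext; simp only [Fin.val_mk]; omega
    rw [this]; rfl
  · unfold nbL; rw [if_neg h]
    rw [Sx_out w _ t (by omega)]; rfl

lemma nbR_fst (w : List Bool) (t : ℕ) (i : Fin w.length) :
    (Option.map Prod.fst (nbR (CATconf Msort w t).1 i)).getD true = Vx w ((i : ℕ) + 1) t := by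
  by_cases h : i.val + 1 < w.length
  · unfold nbR; rw [dif_pos h]
    rw [Vx_in w t _ (by omega)]
    show ((CATconf Msort w t).1 _).1 = _
    have : (⟨((i:ℕ) + 1 : ℤ).toNat, by omega⟩ : Fin w.length) = ⟨i.val + 1, h⟩ := by
      ext; simp
    rw [this]; rfl
  · unfold nbR; rw [dif_neg h]
    rw [Vx_ge w _ t (by omega)]; rfl

lemma nbR_snd (w : List Bool) (t : ℕ) (i : Fin w.length) :
    (Option.map Prod.snd (nbR (CATconf Msort w t).1 i)).getD true = Sx w ((i : ℕ) + 1) t := by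
  by_cases h : i.val + 1 < w.length
  · unfold nbR; rw [dif_pos h]
    rw [Sx_in w t _ (by omega)]
    show ((CATconf Msort w t).1 _).2 = _
    have : (⟨((i:ℕ) + 1 : ℤ).toNat, by omega⟩ : Fin w.length) = ⟨i.val + 1, h⟩ := by
      ext; simp
    rw [this]; rfl
  · unfold nbR; rw [dif_neg h]
    rw [Sx_out w _ t (by omega)]; rfl

/-- One value step, for a cell of the word. -/
lemma VL_step (w : List Bool) (t : ℕ) (i : Fin w.length) :
    VL w (t+1) i = ((VL w t i && Vx w ((i : ℕ) + 1) t) || (Vx w ((i : ℕ) - 1) t && !VL w t i)) := by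
  have : VL w (t+1) i =
      ((((CATconf Msort w t).1 i).1 &&
        (Option.map Prod.fst (nbR (CATconf Msort w t).1 i)).getD true) ||
      ((Option.map Prod.fst (nbL (CATconf Msort w t).1 i)).getD false &&
        !((CATconf Msort w t).1 i).1)) := rfl
  rw [this, nbR_fst, nbL_fst]; rfl

/-- One settled-flag step. -/
lemma SL_step (w : List Bool) (t : ℕ) (i : Fin w.length) :
    SL w (t+1) i = cond (VL w (t+1) i) (Sx w ((i : ℕ) + 1) t && Vx w ((i : ℕ) + 1) t)
      (Sx w ((i : ℕ) - 1) t && !Vx w ((i : ℕ) - 1) t) := by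
  have : SL w (t+1) i =
      cond ((((CATconf Msort w t).1 i).1 &&
          (Option.map Prod.fst (nbR (CATconf Msort w t).1 i)).getD true) ||
        ((Option.map Prod.fst (nbL (CATconf Msort w t).1 i)).getD false &&
          !((CATconf Msort w t).1 i).1))
      ((Option.map Prod.snd (nbR (CATconf Msort w t).1 i)).getD true &&
          (Option.map Prod.fst (nbR (CATconf Msort w t).1 i)).getD true)
      ((Option.map Prod.snd (nbL (CATconf Msort w t).1 i)).getD true &&
          !(Option.map Prod.fst (nbL (CATconf Msort w t).1 i)).getD false) := rfl
  rw [this, nbR_fst, nbL_fst, nbR_snd, nbL_snd]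
  rw [VL_step]
  rfl

/-- One register step. -/
lemma Rg_step (w : List Bool) (t : ℕ) (i : Fin w.length) :
    Rg w (t+1) i = match Rg w t i with
      | some v => some v
      | none => cond (SL w (t+1) i) (some [VL w (t+1) i]) none := by
  have : Rg w (t+1) i = match (CATconf Msort w t).2 i with
      | some v => some v
      | none => (Msort.δ (nbL (CATconf Msort w t).1 i) ((CATconf Msort w t).1 i)
          (nbR (CATconf Msort w t).1 i)).2 := by
    simp only [Rg, CATconf]
    cases (CATconf Msort w t).2 i <;> rfl
  rw [this]
  unfold Rg
  cases (CATconf Msort w t).2 i <;> rfl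

lemma Rg_zero (w : List Bool) (i : Fin w.length) : Rg w 0 i = none := rfl

/-- The extended-value step, valid for every integer position. -/
lemma Vx_step (w : List Bool) (x : ℤ) (t : ℕ) :
    Vx w x (t+1) = ((Vx w x t && Vx w (x+1) t) || (Vx w (x-1) t && !Vx w x t)) := by
  by_cases h : 0 ≤ x ∧ x < w.length
  · rw [Vx_in w (t+1) x h, Vx_in w t x h, VL_step]
    simp only [Fin.val_mk]
    rw [show ((x.toNat : ℕ) : ℤ) + 1 = x + 1 by omega,
       show ((x.toNat : ℕ) : ℤ) - 1 = x - 1 by omega]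
  · rcases (by omega : x < 0 ∨ (w.length : ℤ) ≤ x) with hx | hx
    · rw [Vx_neg w x _ hx, Vx_neg w x _ hx, Vx_neg w (x-1) _ (by omega)]
      simp
    · rw [Vx_ge w x _ hx, Vx_ge w x _ hx, Vx_ge w (x+1) _ (by omega)]
      simp

/-- The extended settled step, for positions inside the word. -/
lemma Sx_step (w : List Bool) (x : ℤ) (t : ℕ) (h : 0 ≤ x ∧ x < w.length) :
    Sx w x (t+1) = cond (Vx w x (t+1)) (Sx w (x+1) t && Vx w (x+1) t)
      (Sx w (x-1) t && !Vx w (x-1) t) := by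
  rw [Sx_in w (t+1) x h, Vx_in w (t+1) x h, SL_step]
  simp only [Fin.val_mk]
  rw [show ((x.toNat : ℕ) : ℤ) + 1 = x + 1 by omega,
     show ((x.toNat : ℕ) : ℤ) - 1 = x - 1 by omega]

/-- The filtering predicate: a hole (an `a`) at position `≥ x`. -/
def Pa (w : List Bool) (x : ℤ) (t : ℕ) (i : ℕ) : Prop := x ≤ (i : ℤ) ∧ Vx w (i : ℤ) t = false

instance Pa.dec (w : List Bool) (x : ℤ) (t : ℕ) : DecidablePred (Pa w x t) := fun _ => by
  unfold Pa; infer_instance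

/-- Number of `a`-cells (holes) at position `≥ x` at time `t`. -/
def Ac (w : List Bool) (x : ℤ) (t : ℕ) : ℕ :=
  ((Finset.range w.length).filter (Pa w x t)).card

/-- The height function: `a`-count right of `x`, padded to the left. -/
def Hh (w : List Bool) (x : ℤ) (t : ℕ) : ℤ := (Ac w x t : ℤ) + ((-x).toNat : ℤ)

/-- Indicator that the hole at `x` moves left at step `t`. -/
def Mv (w : List Bool) (x : ℤ) (t : ℕ) : ℤ :=
  if Vx w x t = false ∧ Vx w (x-1) t = true then 1 else 0

lemma Hh_succ (w : List Bool) (x : ℤ) (t : ℕ) :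
    Hh w x t = Hh w (x+1) t + (if Vx w x t = false then 1 else 0) := by
  rcases (by omega : x < 0 ∨ (0 ≤ x ∧ x < w.length) ∨ (w.length : ℤ) ≤ x) with hx | hx | hx
  · have hA : Ac w x t = Ac w (x+1) t := by
      unfold Ac; congr 1
      apply Finset.filter_congr
      intro a _
      simp only [Pa, eq_iff_iff]
      constructor <;> (rintro ⟨h1, h2⟩; exact ⟨by omega, h2⟩)
    rw [Vx_neg w x t hx]
    simp only [Hh, hA, reduceIte]
    omega
  · have key : (Finset.range w.length).filter (Pa w x t) =
        (if Vx w x t = false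
          then insert x.toNat ((Finset.range w.length).filter (Pa w (x+1) t))
          else (Finset.range w.length).filter (Pa w (x+1) t)) := by
      by_cases hv : Vx w x t = false
      · rw [if_pos hv]
        ext a
        simp only [Finset.mem_filter, Finset.mem_range, Finset.mem_insert, Pa]
        constructor
        · rintro ⟨ha, h1, h2⟩
          by_cases hax : (a : ℤ) = x
          · left; omega
          · right; exact ⟨ha, by omega, h2⟩
        · rintro (rfl | ⟨ha, h1, h2⟩)
          · refine ⟨by omega, by omega, ?_⟩
            rw [show ((x.toNat : ℕ) : ℤ) = x by omega]; exact hv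
          · exact ⟨ha, by omega, h2⟩
      · rw [if_neg hv]
        ext a
        simp only [Finset.mem_filter, Finset.mem_range, Pa]
        constructor
        · rintro ⟨ha, h1, h2⟩
          refine ⟨ha, ?_, h2⟩
          rcases (by omega : x + 1 ≤ (a:ℤ) ∨ ((a:ℕ) : ℤ) = x) with h | h
          · exact h
          · exfalso; apply hv
            rw [← h]; exact h2
        · rintro ⟨ha, h1, h2⟩; exact ⟨ha, by omega, h2⟩
    have hnm : x.toNat ∉ (Finset.range w.length).filter (Pa w (x+1) t) := by
      simp only [Finset.mem_filter, Finset.mem_range, Pa]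
      rintro ⟨_, h1, _⟩; omega
    unfold Hh Ac
    rw [key]
    by_cases hv : Vx w x t = false
    · rw [if_pos hv, if_pos hv, Finset.card_insert_of_notMem hnm]
      push_cast; omega
    · rw [if_neg hv, if_neg hv]
      omega
  · have hA : ∀ y : ℤ, (w.length : ℤ) ≤ y → Ac w y t = 0 := by
      intro y hy
      unfold Ac
      rw [Finset.card_eq_zero, Finset.filter_eq_empty_iff]
      intro a ha
      simp only [Finset.mem_range] at ha
      rintro ⟨h1, _⟩; omega
    rw [Vx_ge w x t hx]
    simp only [Hh, hA x hx, hA (x+1) (by omega), reduceIte]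
    rw [Int.toNat_of_nonpos (by omega), Int.toNat_of_nonpos (by omega)]
    norm_num

lemma Hh_out (w : List Bool) (x : ℤ) (t : ℕ) (hx : (w.length : ℤ) ≤ x) : Hh w x t = 0 := by
  unfold Hh Ac
  rw [Finset.card_eq_zero.2]
  · omega
  · rw [Finset.filter_eq_empty_iff]
    intro a ha
    simp only [Finset.mem_range] at ha
    rintro ⟨h1, _⟩; omega

/-- Local conservation of holes. -/
lemma flow (w : List Bool) (x : ℤ) (t : ℕ) :
    (if Vx w x (t+1) = false then (1:ℤ) else 0) =
      (if Vx w x t = false then (1:ℤ) else 0) - Mv w x t + Mv w (x+1) t := by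
  unfold Mv
  rw [Vx_step w x t, show x + 1 - 1 = x by ring]
  rcases hl : Vx w (x-1) t <;> rcases hc : Vx w x t <;> rcases hr : Vx w (x+1) t <;>
    simp [hl, hc, hr]

/-- The height function evolves by the movement indicator. -/
lemma Hh_step (w : List Bool) (x : ℤ) (t : ℕ) :
    Hh w x (t+1) = Hh w x t - Mv w x t := by
  have main : ∀ j : ℕ, ∀ x : ℤ, (w.length : ℤ) - x ≤ j →
      Hh w x (t+1) = Hh w x t - Mv w x t := by
    intro j
    induction j with
    | zero =>
      intro x hx
      rw [Hh_out w x (t+1) (by omega), Hh_out w x t (by omega)]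
      have : Mv w x t = 0 := by
        unfold Mv
        rw [if_neg]
        rintro ⟨h1, _⟩
        rw [Vx_ge w x t (by omega)] at h1; simp at h1
      omega
    | succ j ih =>
      intro x hx
      by_cases hbig : (w.length : ℤ) ≤ x
      · rw [Hh_out w x (t+1) hbig, Hh_out w x t hbig]
        have : Mv w x t = 0 := by
          unfold Mv
          rw [if_neg]
          rintro ⟨h1, _⟩
          rw [Vx_ge w x t hbig] at h1; simp at h1
        omega
      · rw [Hh_succ w x (t+1), Hh_succ w x t, ih (x+1) (by omega), flow w x t]
        ring
  exact main (w.length - x).toNat x (by omega)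

lemma card_getD (w : List Bool) :
    ((Finset.range w.length).filter (fun i => w.getD i true = false)).card = w.count false := by
  induction w using List.reverseRecOn with
  | nil => simp
  | append_singleton v b ih =>
    rw [List.length_append, List.length_singleton, Finset.range_add_one, Finset.filter_insert,
      List.count_append]
    have hcongr : (Finset.range v.length).filter (fun i => (v ++ [b]).getD i true = false) =
        (Finset.range v.length).filter (fun i => v.getD i true = false) := by
      apply Finset.filter_congr
      intro a ha
      simp only [Finset.mem_range] at ha
      rw [List.getD_append _ _ _ _ ha]
    have hlast : (v ++ [b]).getD v.length true = b := by
      rw [List.getD_append_right _ _ _ _ (le_refl _)]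
      simp
    have hnotmem : v.length ∉ (Finset.range v.length).filter (fun i => v.getD i true = false) := by
      simp
    by_cases hb : b = false
    · rw [if_pos (by rw [hlast, hb]), hcongr, Finset.card_insert_of_notMem (by simpa using hnotmem),
        ih, hb]
      simp
    · have hb' : b = true := by cases b <;> simp_all
      rw [if_neg (by rw [hlast, hb']; simp), hcongr, ih, hb']
      simp

lemma Vx_zero' (w : List Bool) (a : ℕ) (h : a < w.length) : Vx w a 0 = w.getD a true := by
  have h1 : Vx w a 0 = w.get ⟨((a:ℤ)).toNat, by omega⟩ := by
    rw [Vx_in w 0 a ⟨by omega, by omega⟩]; rfl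
  rw [h1, List.getD_eq_getElem _ _ h, List.get_eq_getElem]
  simp

/-- The total number of holes, seen from any position `x ≤ 0`, at time 0. -/
lemma Ac_nonpos_zero (w : List Bool) (x : ℤ) (hx : x ≤ 0) :
    Ac w x 0 = w.count false := by
  rw [← card_getD w]
  unfold Ac
  congr 1
  apply Finset.filter_congr
  intro a ha
  simp only [Finset.mem_range] at ha
  simp only [Pa, eq_iff_iff]
  rw [Vx_zero' w a ha]
  constructor
  · rintro ⟨-, h2⟩; exact h2
  · intro h; exact ⟨by omega, h⟩

/-- For `x ≤ 0` the height function is constant in time: holes never leave. -/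
lemma Hh_nonpos (w : List Bool) (x : ℤ) (hx : x ≤ 0) (t : ℕ) :
    Hh w x t = (w.count false : ℤ) - x := by
  induction t with
  | zero =>
    unfold Hh
    rw [Ac_nonpos_zero w x hx]
    omega
  | succ t ih =>
    rw [Hh_step w x t, ih]
    have : Mv w x t = 0 := by
      unfold Mv
      rw [if_neg]
      rintro ⟨-, h2⟩
      rw [Vx_neg w (x-1) t (by omega)] at h2
      simp at h2
    omega

lemma Hh_nonneg (w : List Bool) (x : ℤ) (t : ℕ) : 0 ≤ Hh w x t := by
  unfold Hh; omega

/-- Lower bound: the sorted profile. -/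
lemma Hh_lower (w : List Bool) (x : ℤ) (t : ℕ) : (w.count false : ℤ) - x ≤ Hh w x t := by
  rcases le_or_gt x 0 with hx | hx
  · rw [Hh_nonpos w x hx]
  · have main : ∀ j : ℕ, (w.count false : ℤ) - j ≤ Hh w j t := by
      intro j
      induction j with
      | zero => rw [show ((0:ℕ):ℤ) = 0 by norm_num, Hh_nonpos w 0 (le_refl _) t]
      | succ j ih =>
        have hs := Hh_succ w (j:ℤ) t
        have h : (0:ℤ) ≤ if Vx w (j:ℤ) t = false then (1:ℤ) else 0 := by split <;> omega
        push_cast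
        omega
    have := main x.toNat
    rw [show ((x.toNat : ℕ) : ℤ) = x by omega] at this
    exact this
lemma count_add (w : List Bool) : w.count false + w.count true = w.length := by
  induction w with
  | nil => rfl
  | cons a l ih => cases a <;> simp [List.count_cons] <;> omega

/-- `Hh` is at most the total number of holes, right of the origin. -/
lemma Hh_le_k (w : List Bool) (x : ℤ) (hx : 0 ≤ x) (t : ℕ) :
    Hh w x t ≤ (w.count false : ℤ) := by
  have h0 : Hh w 0 t = (w.count false : ℤ) := by
    rw [Hh_nonpos w 0 (le_refl _) t]; ring
  have hsub : (Finset.range w.length).filter (Pa w x t) ⊆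
      (Finset.range w.length).filter (Pa w 0 t) := by
    intro a ha
    simp only [Finset.mem_filter, Pa] at *
    exact ⟨ha.1, by omega, ha.2.2⟩
  have hcard := Finset.card_le_card hsub
  unfold Hh Ac at *
  omega

/-- `Hh` is at most the span to the right end. -/
lemma Ac_le_span (w : List Bool) (x : ℤ) (hx : 0 ≤ x) (t : ℕ) :
    (Ac w x t : ℤ) ≤ (w.length : ℤ) - x ∨ Ac w x t = 0 := by
  rcases le_or_gt x w.length with hxn | hxn
  · left
    have hsub : (Finset.range w.length).filter (Pa w x t) ⊆ Finset.Ico x.toNat w.length := by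
      intro a ha
      simp only [Finset.mem_filter, Finset.mem_range, Pa] at ha
      simp only [Finset.mem_Ico]
      omega
    have hcard := Finset.card_le_card hsub
    rw [Nat.card_Ico] at hcard
    unfold Ac
    omega
  · right
    unfold Ac
    rw [Finset.card_eq_zero, Finset.filter_eq_empty_iff]
    intro a ha
    simp only [Finset.mem_range] at ha
    rintro ⟨h1, _⟩; omega

/-- One-step inequality towards the max-plus recursion. -/
lemma Hh_step_le (w : List Bool) (x : ℤ) (t : ℕ) :
    Hh w x (t+1) ≤ Hh w (x+1) t ∨ Hh w x (t+1) ≤ Hh w (x-1) t - 1 := by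
  have hstep := Hh_step w x t
  have h1 := Hh_succ w x t
  have h2 := Hh_succ w (x-1) t
  rw [show x - 1 + 1 = x by ring] at h2
  unfold Mv at hstep
  by_cases hvx : Vx w x t = false
  · rw [if_pos hvx] at h1
    by_cases hvl : Vx w (x-1) t = true
    · right
      rw [if_pos ⟨hvx, hvl⟩] at hstep
      have : (0:ℤ) ≤ if Vx w (x-1) t = false then (1:ℤ) else 0 := by split <;> omega
      omega
    · right
      rw [if_neg (by tauto)] at hstep
      rw [if_pos (by cases hc : Vx w (x-1) t; rfl; exact absurd hc hvl)] at h2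
      omega
  · left
    rw [if_neg (by tauto)] at hstep
    rw [if_neg hvx] at h1
    omega

/-- The key invariant, by induction on time. -/
lemma Hh_inv (w : List Bool) (t : ℕ) (x : ℤ) :
    2 * Hh w x t ≤ 2*((w.count false : ℤ) - x) ∨
    2 * Hh w x t ≤ 2*(w.count false : ℤ) + (w.count true : ℤ) - x - t ∨
    Hh w x t ≤ 0 := by
  have hnm := count_add w
  induction t generalizing x with
  | zero =>
    rcases (by omega : x < 0 ∨ ((0:ℤ) ≤ x ∧ x ≤ (w.count true : ℤ)) ∨
        ((w.count true : ℤ) < x ∧ x ≤ w.length) ∨ (w.length : ℤ) < x) with hx | hx | hx | hx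
    · left; rw [Hh_nonpos w x (by omega) 0]
    · right; left
      have := Hh_le_k w x hx.1 0
      omega
    · rcases Ac_le_span w x (by omega) 0 with h | h
      · right; left
        unfold Hh
        omega
      · right; right
        unfold Hh
        omega
    · right; right
      rw [Hh_out w x 0 (by omega)]
  | succ t ih =>
    rcases Hh_step_le w x t with h | h
    · rcases ih (x+1) with h1 | h1 | h1
      · left; omega
      · right; left; omega
      · right; right; omega
    · rcases ih (x-1) with h1 | h1 | h1
      · left; omega
      · right; left; omega
      · right; right; omega

/-- Below `k`, the height settles to the sorted profile by time `x + m`. -/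
lemma Hh_settled_low (w : List Bool) (x : ℤ) (hx : 0 ≤ x) (hxk : x ≤ (w.count false : ℤ))
    (t : ℕ) (ht : x + (w.count true : ℤ) ≤ t) : Hh w x t = (w.count false : ℤ) - x := by
  have hlow := Hh_lower w x t
  rcases Hh_inv w t x with h | h | h <;> omega

/-- Above `k`, the height settles to `0` by time `n + k - x`. -/
lemma Hh_settled_high (w : List Bool) (x : ℤ) (hxk : (w.count false : ℤ) ≤ x)
    (t : ℕ) (ht : (w.length : ℤ) + (w.count false : ℤ) - x ≤ t) : Hh w x t = 0 := by
  have hnm := count_add w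
  have hpos := Hh_nonneg w x t
  rcases Hh_inv w t x with h | h | h <;> omega

/-- A cell left of `k` holds an `a` from time `x + m + 1` on. -/
lemma V_low (w : List Bool) (j : ℤ) (h0 : 0 ≤ j) (hj : j < (w.count false : ℤ))
    (t : ℕ) (ht : j + (w.count true : ℤ) + 1 ≤ t) : Vx w j t = false := by
  have h1 : Hh w j t = (w.count false : ℤ) - j :=
    Hh_settled_low w j h0 (by omega) t (by omega)
  have h2 : Hh w (j+1) t = (w.count false : ℤ) - (j+1) :=
    Hh_settled_low w (j+1) (by omega) (by omega) t (by omega)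
  have h3 := Hh_succ w j t
  by_cases hv : Vx w j t = false
  · exact hv
  · rw [if_neg hv] at h3; omega

/-- A cell right of `k` holds a `b` from time `n + k - x` on. -/
lemma V_high (w : List Bool) (j : ℤ) (hj : (w.count false : ℤ) ≤ j)
    (t : ℕ) (ht : (w.length : ℤ) + (w.count false : ℤ) - j ≤ t) : Vx w j t = true := by
  have h1 : Hh w j t = 0 := Hh_settled_high w j hj t (by omega)
  have h2 : Hh w (j+1) t = 0 := Hh_settled_high w (j+1) (by omega) t (by omega)
  have h3 := Hh_succ w j t
  cases hv : Vx w j t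
  · rw [if_pos hv] at h3; omega
  · rfl
lemma count_false_le (w : List Bool) : w.count false ≤ w.length := List.count_le_length

/-- Completeness, `a`-side: cells left of `k` are settled from time `m + 1 + i` on. -/
lemma settledA (w : List Bool) : ∀ i : ℕ, (i : ℤ) < (w.count false : ℤ) →
    ∀ t : ℕ, w.count true + 1 + i ≤ t → Sx w i t = true := by
  intro i
  induction i with
  | zero =>
    intro hk t ht
    obtain ⟨s, rfl⟩ : ∃ s, t = s + 1 := ⟨t - 1, by omega⟩
    have hn := count_add w
    simp only [Nat.cast_zero] at hk ⊢
    rw [Sx_step w 0 s ⟨by norm_num, by omega⟩]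
    rw [V_low w 0 (by norm_num) hk (s+1) (by push_cast; omega)]
    rw [show (0:ℤ) - 1 = -1 by ring, Sx_out w (-1) s (by omega), Vx_neg w (-1) s (by omega)]
    rfl
  | succ i ih =>
    intro hk t ht
    obtain ⟨s, rfl⟩ : ∃ s, t = s + 1 := ⟨t - 1, by omega⟩
    have hn := count_add w
    rw [Sx_step w (i+1 : ℕ) s ⟨by positivity, by push_cast; omega⟩]
    rw [V_low w (i+1 : ℕ) (by positivity) (by push_cast; omega) (s+1) (by push_cast; omega)]
    rw [show ((i+1 : ℕ) : ℤ) - 1 = (i : ℕ) by push_cast; ring]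
    rw [ih (by push_cast at hk ⊢; omega) s (by omega)]
    rw [V_low w i (by positivity) (by push_cast; omega) s (by push_cast; omega)]
    rfl

/-- Completeness, `b`-side: cells right of `k` are settled from time `n + k - i` on. -/
lemma settledB (w : List Bool) : ∀ d : ℕ, ∀ i : ℕ, i + d + 1 = w.length →
    (w.count false : ℤ) ≤ (i : ℤ) →
    ∀ t : ℕ, (w.length : ℤ) + (w.count false : ℤ) - (i : ℤ) ≤ t → Sx w i t = true := by
  intro d
  induction d with
  | zero =>
    intro i hd hk t ht
    obtain ⟨s, rfl⟩ : ∃ s, t = s + 1 := ⟨t - 1, by omega⟩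
    rw [Sx_step w i s ⟨by positivity, by push_cast; omega⟩]
    rw [V_high w i hk (s+1) (by push_cast at ht ⊢; omega)]
    rw [Sx_out w ((i:ℤ)+1) s (by push_cast; omega), Vx_ge w ((i:ℤ)+1) s (by push_cast; omega)]
    rfl
  | succ d ih =>
    intro i hd hk t ht
    obtain ⟨s, rfl⟩ : ∃ s, t = s + 1 := ⟨t - 1, by omega⟩
    rw [Sx_step w i s ⟨by positivity, by push_cast; omega⟩]
    rw [V_high w i hk (s+1) (by push_cast at ht ⊢; omega)]
    rw [show ((i : ℕ) : ℤ) + 1 = ((i+1 : ℕ) : ℤ) by push_cast; ring]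
    rw [ih (i+1) (by omega) (by push_cast; omega) s (by push_cast at ht ⊢; omega)]
    rw [V_high w (i+1 : ℕ) (by push_cast; omega) s (by push_cast; omega)]
    rfl

/-- All cells are settled at time `n`. -/
lemma all_settled (w : List Bool) (i : Fin w.length) : SL w w.length i = true := by
  have hn := count_add w
  have hfin : (⟨(((i : ℕ) : ℤ)).toNat, by omega⟩ : Fin w.length) = i := by
    ext; simp
  by_cases hk : ((i : ℕ) : ℤ) < (w.count false : ℤ)
  · have := settledA w i hk w.length (by push_cast at hk ⊢; omega)
    rw [Sx_in w _ _ ⟨by positivity, by exact_mod_cast i.isLt⟩, hfin] at this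
    exact this
  · have := settledB w (w.length - 1 - i) i (by have := i.isLt; omega) (by omega)
      w.length (by push_cast; omega)
    rw [Sx_in w _ _ ⟨by positivity, by exact_mod_cast i.isLt⟩, hfin] at this
    exact this

/-- Soundness: settled cells stay settled with unchanged value. -/
lemma settled_sound (w : List Bool) : ∀ t : ℕ, ∀ x : ℤ, Sx w x t = true →
    Sx w x (t+1) = true ∧ Vx w x (t+1) = Vx w x t := by
  intro t
  induction t with
  | zero =>
    intro x hs
    by_cases h : 0 ≤ x ∧ x < w.length
    · rw [Sx_in w 0 x h] at hs
      rw [SL_zero] at hs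
      exact absurd hs (by simp)
    · rcases (by omega : x < 0 ∨ (w.length : ℤ) ≤ x) with hx | hx
      · exact ⟨Sx_out w x 1 (by omega), by rw [Vx_neg w x 1 hx, Vx_neg w x 0 hx]⟩
      · exact ⟨Sx_out w x 1 (by omega), by rw [Vx_ge w x 1 hx, Vx_ge w x 0 hx]⟩
  | succ t ih =>
    intro x hs
    by_cases h : 0 ≤ x ∧ x < w.length
    · rw [Sx_step w x t h] at hs
      cases hv : Vx w x (t+1)
      · rw [hv] at hs
        simp only [cond_false, Bool.and_eq_true, Bool.not_eq_true'] at hs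
        obtain ⟨hs1, hv1⟩ := hs
        obtain ⟨hs1', hv1'⟩ := ih (x-1) hs1
        rw [hv1] at hv1'
        have hvnext : Vx w x (t+1+1) = false := by
          rw [Vx_step w x (t+1), hv, hv1']
          simp
        refine ⟨?_, hvnext⟩
        rw [Sx_step w x (t+1) h, hvnext]
        simp only [cond_false, Bool.and_eq_true, Bool.not_eq_true']
        exact ⟨hs1', hv1'⟩
      · rw [hv] at hs
        simp only [cond_true, Bool.and_eq_true] at hs
        obtain ⟨hs1, hv1⟩ := hs
        obtain ⟨hs1', hv1'⟩ := ih (x+1) hs1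
        rw [hv1] at hv1'
        have hvnext : Vx w x (t+1+1) = true := by
          rw [Vx_step w x (t+1), hv, hv1']
          simp
        refine ⟨?_, hvnext⟩
        rw [Sx_step w x (t+1) h, hvnext]
        simp only [cond_true, Bool.and_eq_true]
        exact ⟨hs1', hv1'⟩
    · rcases (by omega : x < 0 ∨ (w.length : ℤ) ≤ x) with hx | hx
      · exact ⟨Sx_out w x _ (by omega), by rw [Vx_neg w x _ hx, Vx_neg w x _ hx]⟩
      · exact ⟨Sx_out w x _ (by omega), by rw [Vx_ge w x _ hx, Vx_ge w x _ hx]⟩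

/-- Values never change after a cell is settled. -/
lemma settled_persist (w : List Bool) (t : ℕ) (x : ℤ) (hs : Sx w x t = true) :
    ∀ s : ℕ, t ≤ s → Vx w x s = Vx w x t := by
  intro s hts
  obtain ⟨d, rfl⟩ : ∃ d, s = t + d := ⟨s - t, by omega⟩
  clear hts
  induction d with
  | zero => rfl
  | succ d ih =>
    have hsd : Sx w x (t+d) = true := by
      clear ih
      induction d with
      | zero => exact hs
      | succ d ih2 => exact (settled_sound w (t+d) x ih2).1
    rw [show t + (d+1) = (t+d) + 1 by ring, (settled_sound w (t+d) x hsd).2, ih]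
/-- The letter of the sorted output at position `i`. -/
def finalB (w : List Bool) (i : ℕ) : Bool := decide (w.count false ≤ i)

lemma Sx_fin (w : List Bool) (t : ℕ) (i : Fin w.length) : Sx w (i : ℕ) t = SL w t i := by
  rw [Sx_in w t _ ⟨by positivity, by exact_mod_cast i.isLt⟩]
  congr 1

lemma Vx_fin (w : List Bool) (t : ℕ) (i : Fin w.length) : Vx w (i : ℕ) t = VL w t i := by
  rw [Vx_in w t _ ⟨by positivity, by exact_mod_cast i.isLt⟩]
  congr 1

/-- A settled cell's value is the sorted letter. -/
lemma VL_final (w : List Bool) (t : ℕ) (i : Fin w.length) (h : SL w t i = true) :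
    VL w t i = finalB w (i : ℕ) := by
  have hsx : Sx w (i : ℕ) t = true := by rw [Sx_fin]; exact h
  have hn := count_add w
  by_cases hik : (i : ℕ) < w.count false
  · have hs := settled_persist w t (i : ℕ) hsx (t + (i + w.count true + 1)) (by omega)
    rw [V_low w (i : ℕ) (by positivity) (by exact_mod_cast hik)
      (t + (i + w.count true + 1)) (by push_cast; omega)] at hs
    rw [← Vx_fin, ← hs]
    unfold finalB
    simp
    omega
  · have hs := settled_persist w t (i : ℕ) hsx (t + (w.length + w.count false)) (by omega)
    rw [V_high w (i : ℕ) (by push_cast; omega)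
      (t + (w.length + w.count false)) (by push_cast; omega)] at hs
    rw [← Vx_fin, ← hs]
    unfold finalB
    simp
    omega

/-- The register, if set, holds the sorted letter. -/
lemma Rg_val (w : List Bool) : ∀ (t : ℕ) (i : Fin w.length),
    Rg w t i = none ∨ Rg w t i = some [finalB w (i : ℕ)] := by
  intro t
  induction t with
  | zero => intro i; left; rfl
  | succ t ih =>
    intro i
    rw [Rg_step]
    rcases ih i with h | h
    · rw [h]
      cases hS : SL w (t+1) i
      · left; rfl
      · right
        simp only [cond_true]
        rw [VL_final w (t+1) i hS]
    · rw [h]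
      right; rfl

/-- Settled cells have emitted. -/
lemma Rg_isSome (w : List Bool) (t : ℕ) (i : Fin w.length) (h : SL w t i = true) :
    (Rg w t i).isSome = true := by
  cases t with
  | zero => rw [SL_zero] at h; exact absurd h (by simp)
  | succ t =>
    rw [Rg_step]
    cases hR : Rg w t i
    · rw [h]; rfl
    · rfl

/-- At time `n` every register holds its sorted letter. -/
lemma Rg_final (w : List Bool) (i : Fin w.length) :
    Rg w w.length i = some [finalB w (i : ℕ)] := by
  rcases Rg_val w w.length i with h | h
  · have := Rg_isSome w w.length i (all_settled w i)
    rw [h] at this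
    exact absurd this (by simp)
  · exact h

lemma flatten_singletons {α : Type} : ∀ (n : ℕ) (f : Fin n → α),
    (List.ofFn fun i => [f i]).flatten = List.ofFn f := by
  intro n
  induction n with
  | zero => intro f; rfl
  | succ n ih =>
    intro f
    rw [List.ofFn_succ, List.ofFn_succ (f := f), List.flatten_cons, ih]
    rfl

/-- The sorted word. -/
def sortedW (w : List Bool) : List Bool :=
  List.replicate (w.count false) false ++ List.replicate (w.count true) true

lemma ofFn_final (w : List Bool) :
    List.ofFn (fun i : Fin w.length => finalB w (i : ℕ)) = sortedW w := by
  have hn := count_add w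
  apply List.ext_getElem
  · simp [sortedW]
  · intro i h1 h2
    simp only [List.getElem_ofFn]
    simp only [sortedW, finalB]
    by_cases hik : i < w.count false
    · rw [List.getElem_append_left (by simpa using hik)]
      simp [hik]
    · rw [List.getElem_append_right (by simpa using hik)]
      simp at hik ⊢
      omega

/-- Main emission theorem: output is complete and sorted at time `n`. -/
lemma outputs_length (w : List Bool) : CATOutputsBy Msort w (sortedW w) w.length := by
  constructor
  · intro i
    have : (CATconf Msort w w.length).2 i = Rg w w.length i := rfl
    rw [this, Rg_final]
    rfl
  · have : (fun i : Fin w.length => ((CATconf Msort w w.length).2 i).getD []) =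
        (fun i : Fin w.length => [finalB w (i : ℕ)]) := by
      funext i
      have : (CATconf Msort w w.length).2 i = Rg w w.length i := rfl
      rw [this, Rg_final]
      rfl
    rw [this, flatten_singletons, ofFn_final]

/-- Any produced output is the sorted word. -/
lemma outputs_unique (w v : List Bool) (t : ℕ) (h : CATOutputsBy Msort w v t) :
    v = sortedW w := by
  obtain ⟨hsome, hflat⟩ := h
  have : (fun i : Fin w.length => ((CATconf Msort w t).2 i).getD []) =
      (fun i : Fin w.length => [finalB w (i : ℕ)]) := by
    funext i
    have hRg : (CATconf Msort w t).2 i = Rg w t i := rfl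
    rcases Rg_val w t i with hv | hv
    · exfalso
      have := hsome i
      rw [hRg, hv] at this
      exact absurd this (by simp)
    · rw [hRg, hv]
      rfl
  rw [hflat, this, flatten_singletons, ofFn_final]

/-- Acceptance is immediate (every state accepting), for nonempty input. -/
lemma accepts_zero (w : List Bool) (hw : 0 < w.length) (t : ℕ) : CATAcceptsBy Msort w t :=
  ⟨0, Nat.zero_le _, hw, Set.mem_univ _⟩

end SortCAT

/-- the sorting transduction `{(w, a^{|w|_a} b^{|w|_b}) : w ∈ {a,b}⁺}` is
realized by a cellular automaton transducer in real time. The alphabet `{a,b}` is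
modelled by `Bool` with `a = false` and `b = true`. -/
theorem sorting_transduction_in_CAT_rt_rt :
    {p : List Bool × List Bool | ∃ w : List Bool, w ≠ [] ∧
        p = (w, List.replicate (w.count false) false ++ List.replicate (w.count true) true)} ∈
      CATT Bool Bool rtC rtC := by
  refine ⟨SortCAT.Msort, id, id, rfl, rfl, ?_, ?_⟩
  · ext p
    constructor
    · rintro ⟨w, hne, rfl⟩
      have hw : 0 < w.length := List.length_pos_iff.2 hne
      exact ⟨⟨0, SortCAT.accepts_zero w hw 0⟩,
        ⟨w.length, SortCAT.outputs_length w⟩⟩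
    · rintro ⟨⟨ta, t', ht', hlen, -⟩, to', hout⟩
      refine ⟨p.1, by simpa using List.length_pos_iff.1 hlen, ?_⟩
      have := SortCAT.outputs_unique p.1 p.2 to' hout
      rw [show (p.1, List.replicate (p.1.count false) false ++
        List.replicate (p.1.count true) true) = (p.1, SortCAT.sortedW p.1) from rfl, ← this]
  · rintro p ⟨⟨ta, t', ht', hlen, -⟩, to', hout⟩
    refine ⟨SortCAT.accepts_zero p.1 hlen _, ?_⟩
    have := SortCAT.outputs_unique p.1 p.2 to' hout
    rw [this]
    exact SortCAT.outputs_length p.1
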